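/- Let f₁,…,fₙ ∈ ℝ[x₁,…,xₙ] and let I be a δ-stable ideal of the differential polynomial ring ℝ{x₁,…,xₙ} (that is, δ(I) ⊆ I) such that x_i^{(1)} − ι(f_i) ∈ I for all 1 ≤ i ≤ n. Then for every p ∈ ℝ[x₁,…,xₙ] with ι(p) ∈ I, the image of the Lie derivative satisfies ι(L(p)) ∈ I, where L(p) = Σᵢ (∂p/∂xᵢ)·fᵢ. -/
import Mathlib


open MvPolynomial

/-- The differential polynomial ring ℝ{x₁,…,xₙ}: the polynomial ring over ℝ in
the indeterminates x_i^{(k)}, indexed by pairs (i, k). -/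
abbrev DiffPoly (n : ℕ) : Type := MvPolynomial (Fin n × ℕ) ℝ

/-- The derivation δ on ℝ{x₁,…,xₙ} with δ(x_i^{(k)}) = x_i^{(k+1)}. -/
noncomputable def delta (n : ℕ) : Derivation ℝ (DiffPoly n) (DiffPoly n) :=
  MvPolynomial.mkDerivation ℝ (fun v : Fin n × ℕ => X (v.1, v.2 + 1))

/-- The ring embedding ι : ℝ[x₁,…,xₙ] → ℝ{x₁,…,xₙ} sending x_i to x_i^{(0)}. -/
noncomputable def iota {n : ℕ} (p : MvPolynomial (Fin n) ℝ) : DiffPoly n :=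
  rename (fun i : Fin n => (i, 0)) p

/-- The Lie derivative of a polynomial p with respect to the polynomial vector
field x' = f(x): L(p) = Σᵢ (∂p/∂xᵢ)·fᵢ. -/
noncomputable def lieDeriv {n : ℕ} (f : Fin n → MvPolynomial (Fin n) ℝ)
    (p : MvPolynomial (Fin n) ℝ) : MvPolynomial (Fin n) ℝ :=
  ∑ i, pderiv i p * f i

lemma delta_iota {n : ℕ} (p : MvPolynomial (Fin n) ℝ) :
    delta n (iota p) = ∑ i, iota (pderiv i p) * X (i, 1) := by
  induction p using MvPolynomial.induction_on with
  | C a =>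
      simp [iota, delta]
  | add p q hp hq =>
      rw [show iota (p + q) = iota p + iota q from by simp [iota], map_add, hp, hq,
        ← Finset.sum_add_distrib]
      refine Finset.sum_congr rfl fun j _ => ?_
      simp [iota, add_mul]
  | mul_X p i hp =>
      have : iota (p * X i) = iota p * X (i, 0) := by simp [iota]
      rw [this, Derivation.leibniz]
      have hXi : delta n (X (i, 0) : DiffPoly n) = X (i, 1) := by
        simp [delta, MvPolynomial.mkDerivation_X]
      rw [hXi, hp]
      have : ∀ j : Fin n, iota (pderiv j (p * X i)) * X (j, 1)
          = iota (pderiv j p) * X (j, 1) * X (i, 0)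
            + (if j = i then iota p * X (i, 1) else 0) := by
        intro j
        rw [pderiv_mul, pderiv_X]
        by_cases h : j = i <;>
          simp [h, iota, map_add, add_mul, Pi.single_apply] <;> ring
      rw [Finset.sum_congr rfl (fun j _ => this j), Finset.sum_add_distrib,
        ← Finset.sum_mul, Finset.sum_ite_eq' Finset.univ i]
      simp [smul_eq_mul]
      ring

theorem stmt16 (n : ℕ) (f : Fin n → MvPolynomial (Fin n) ℝ)
    (I : Ideal (DiffPoly n))
    (hstable : ∀ q ∈ I, delta n q ∈ I)
    (hode : ∀ i : Fin n, (X (i, 1) : DiffPoly n) - iota (f i) ∈ I)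
    (p : MvPolynomial (Fin n) ℝ) (hp : iota p ∈ I) :
    iota (lieDeriv f p) ∈ I := by
  have h1 : delta n (iota p) ∈ I := hstable _ hp
  have h2 : (∑ i, iota (pderiv i p) * (X (i, 1) - iota (f i))) ∈ I :=
    Ideal.sum_mem _ fun i _ => I.mul_mem_left _ (hode i)
  have key : iota (lieDeriv f p)
      = delta n (iota p) - ∑ i, iota (pderiv i p) * (X (i, 1) - iota (f i)) := by
    rw [delta_iota]
    simp only [mul_sub, Finset.sum_sub_distrib]
    simp [lieDeriv, iota, map_sum]
  rw [key]
  exact I.sub_mem h1 h2
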